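/- Let θ ≥ 1 and s > 0 be real, and define t = ((s^{1/θ} + 2 − √((s^{1/θ} + 2)² − 4))/2)^θ. Then t ∈ (0,1) and φ_A1(t;θ) = (t^{1/θ} + t^{-1/θ} − 2)^θ = s; i.e., the corrected inverse generator formula for A1 is a right inverse of φ_A1(·;θ) on (0, ∞). -/
import Mathlib


/-- The A1 generator `φ_A1(t;θ) = (t^{1/θ} + t^{-1/θ} − 2)^θ` (real powers). -/
noncomputable def phiA1 (θ t : ℝ) : ℝ := (t ^ (1 / θ) + t ^ (-(1 / θ)) - 2) ^ θ

/-- For `θ ≥ 1` and `s > 0`, the corrected A1 inverse-generator formula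
`t = ((s^{1/θ} + 2 − √((s^{1/θ} + 2)² − 4))/2)^θ` satisfies `t ∈ (0,1)` and
`φ_A1(t;θ) = s`. -/
theorem stmt_17 (θ s : ℝ) (hθ : 1 ≤ θ) (hs : 0 < s)
    (t : ℝ)
    (htdef : t = ((s ^ (1 / θ) + 2 - Real.sqrt ((s ^ (1 / θ) + 2) ^ 2 - 4)) / 2) ^ θ) :
    t ∈ Set.Ioo (0 : ℝ) 1 ∧ phiA1 θ t = s := by
  have hθ0 : 0 < θ := lt_of_lt_of_le one_pos hθ
  set a := s ^ (1 / θ) with ha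
  have ha0 : 0 < a := Real.rpow_pos_of_pos hs _
  set c := a + 2 with hc
  have hc2 : 2 < c := by linarith
  have hcsq : (0 : ℝ) ≤ c ^ 2 - 4 := by nlinarith
  set d := Real.sqrt (c ^ 2 - 4) with hd
  have hd2 : d ^ 2 = c ^ 2 - 4 := Real.sq_sqrt hcsq
  have hd0 : 0 ≤ d := Real.sqrt_nonneg _
  have hdc : d < c := by nlinarith
  set u := (c - d) / 2 with hu
  have hu0 : 0 < u := by rw [hu]; linarith
  have hu1 : u < 1 := by rw [hu]; nlinarith
  have huinv : u * (c - u) = 1 := by rw [hu]; nlinarith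
  have ht : t = u ^ θ := htdef
  have htu : t ^ (1 / θ) = u := by
    rw [ht, ← Real.rpow_mul hu0.le]
    · rw [mul_one_div, div_self hθ0.ne', Real.rpow_one]
  have hinv : t ^ (-(1 / θ)) = c - u := by
    rw [Real.rpow_neg (by rw [ht]; positivity), htu]
    field_simp
    nlinarith
  refine ⟨⟨by rw [ht]; exact Real.rpow_pos_of_pos hu0 _,
      by rw [ht]; exact Real.rpow_lt_one hu0.le hu1 hθ0⟩, ?_⟩
  unfold phiA1
  rw [htu, hinv]
  have : u + (c - u) - 2 = a := by rw [hc]; ring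
  rw [this, ha, ← Real.rpow_mul hs.le, one_div, inv_mul_cancel₀ hθ0.ne', Real.rpow_one]
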